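/- Let G be a group and let U, V, M be subgroups of G such that M normalizes both U and V and the multiplication map V × M × U → G, (v, m, u) ↦ v·m·u, is injective. Let K be a subgroup of G with K = (K∩V)·(K∩M)·(K∩U), and let s ∈ G satisfy s·M·s⁻¹ = M, s·(K∩M)·s⁻¹ = K∩M, and K = (K ∩ s⁻¹Vs)·(K∩M)·(K ∩ s⁻¹Us). Suppose m ∈ M, u ∈ U, and k, k′ ∈ K satisfy u·m·s = k⁻¹·s·k′. Then m ∈ K∩M. Moreover, writing k = k_V·k_M·k_U with k_V ∈ K∩V, k_M ∈ K∩M, k_U ∈ K∩U, and k′ = k′_V·k′_M·k′_U with k′_V ∈ K ∩ s⁻¹Vs, k′_M ∈ K∩M, k′_U ∈ K ∩ s⁻¹Us, one has k_M·m = s·k′_M·s⁻¹. -/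
import Mathlib


/-- Let `G` be a group with subgroups `U`, `V`, `M`, `K` such that `M` normalizes `U`
and `V` and the multiplication map `V × M × U → G` is injective.  Assume
`K = (K∩V)·(K∩M)·(K∩U)`, and let `s ∈ G` satisfy `sMs⁻¹ = M`, `s(K∩M)s⁻¹ = K∩M` and
`K = (K ∩ s⁻¹Vs)·(K∩M)·(K ∩ s⁻¹Us)`.  If `m ∈ M`, `u ∈ U` and `k, k′ ∈ K` satisfy
`u·m·s = k⁻¹·s·k′`, then `m ∈ K∩M`; moreover, for any Iwahori factorizations
`k = k_V·k_M·k_U` and `k′ = k′_V·k′_M·k′_U` as above, one has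
`k_M·m = s·k′_M·s⁻¹`. -/
theorem levi_component_of_double_coset
    {G : Type*} [Group G] (U V M K : Subgroup G)
    (hUM : ∀ m ∈ M, ∀ u ∈ U, m * u * m⁻¹ ∈ U)
    (hVM : ∀ m ∈ M, ∀ v ∈ V, m * v * m⁻¹ ∈ V)
    (hinj : Function.Injective
      (fun p : V × M × U => ((p.1 : G) * (p.2.1 : G) * (p.2.2 : G))))
    (hKdec : ∀ k ∈ K, ∃ v ∈ V ⊓ K, ∃ m ∈ M ⊓ K, ∃ u ∈ U ⊓ K, k = v * m * u)
    (s : G)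
    (hsM : ∀ g : G, g ∈ M ↔ s * g * s⁻¹ ∈ M)
    (hsKM : ∀ g : G, g ∈ K ⊓ M ↔ s * g * s⁻¹ ∈ K ⊓ M)
    (hKdec' : ∀ k ∈ K, ∃ v' : G, v' ∈ K ∧ s * v' * s⁻¹ ∈ V ∧
      ∃ m' ∈ K ⊓ M, ∃ u' : G, u' ∈ K ∧ s * u' * s⁻¹ ∈ U ∧ k = v' * m' * u')
    (m u k k' : G) (hm : m ∈ M) (hu : u ∈ U) (hk : k ∈ K) (hk' : k' ∈ K)
    (heq : u * m * s = k⁻¹ * s * k') :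
    m ∈ K ⊓ M ∧
    ∀ kV kM kU k'V k'M k'U : G,
      kV ∈ V ⊓ K → kM ∈ M ⊓ K → kU ∈ U ⊓ K → k = kV * kM * kU →
      k'V ∈ K → s * k'V * s⁻¹ ∈ V → k'M ∈ K ⊓ M →
      k'U ∈ K → s * k'U * s⁻¹ ∈ U → k' = k'V * k'M * k'U →
      kM * m = s * k'M * s⁻¹ := by
  have key : ∀ kV kM kU k'V k'M k'U : G,
      kV ∈ V ⊓ K → kM ∈ M ⊓ K → kU ∈ U ⊓ K → k = kV * kM * kU →
      k'V ∈ K → s * k'V * s⁻¹ ∈ V → k'M ∈ K ⊓ M →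
      k'U ∈ K → s * k'U * s⁻¹ ∈ U → k' = k'V * k'M * k'U →
      kM * m = s * k'M * s⁻¹ := by
    intro kV kM kU k'V k'M k'U hkV hkM hkU hkfac hk'VK hk'V hk'M hk'UK hk'U hk'fac
    have h0 : k * (u * m * s) = s * k' := by
      rw [heq]; group
    have h1 : kV * (kM * m) * (m⁻¹ * (kU * u) * m)
        = (s * k'V * s⁻¹) * (s * k'M * s⁻¹) * (s * k'U * s⁻¹) := by
      rw [hkfac, hk'fac] at h0
      calc kV * (kM * m) * (m⁻¹ * (kU * u) * m)
          = (kV * kM * kU * (u * m * s)) * s⁻¹ := by group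
        _ = (s * (k'V * k'M * k'U)) * s⁻¹ := by rw [h0]
        _ = (s * k'V * s⁻¹) * (s * k'M * s⁻¹) * (s * k'U * s⁻¹) := by group
    have hbM : kM * m ∈ M := mul_mem hkM.1 hm
    have hcU : m⁻¹ * (kU * u) * m ∈ U := by
      have := hUM m⁻¹ (inv_mem hm) (kU * u) (mul_mem hkU.1 hu)
      simpa using this
    have hb'M : s * k'M * s⁻¹ ∈ M := (hsM k'M).mp hk'M.2
    have := hinj (a₁ := (⟨kV, hkV.1⟩, ⟨kM * m, hbM⟩, ⟨m⁻¹ * (kU * u) * m, hcU⟩))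
      (a₂ := (⟨s * k'V * s⁻¹, hk'V⟩, ⟨s * k'M * s⁻¹, hb'M⟩, ⟨s * k'U * s⁻¹, hk'U⟩))
      (by simpa using h1)
    have := congrArg (fun p : V × M × U => (p.2.1 : G)) this
    simpa using this
  refine ⟨?_, key⟩
  obtain ⟨v, hv, m₀, hm₀, u₀, hu₀, hfac⟩ := hKdec k hk
  obtain ⟨v', hv'K, hv', m', hm', u', hu'K, hu', hfac'⟩ := hKdec' k' hk'
  have h := key v m₀ u₀ v' m' u' hv hm₀ hu₀ hfac hv'K hv' hm' hu'K hu' hfac'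
  have : m = m₀⁻¹ * (s * m' * s⁻¹) := by rw [← h]; group
  rw [this]
  exact mul_mem (inv_mem ⟨hm₀.2, hm₀.1⟩) ((hsKM m').mp hm')
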